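/- Suppose that for every a,b,c,d,R,S > 0 the inequality (R/(R+S))·(1/(1−√(ab/((R+a)(R+b))))) + (S/(R+S))·(1/(1−√(cd/((S+c)(S+d))))) ≤ 1/(1−√((a+c)(b+d)/((R+S+a+c)(R+S+b+d)))) holds. Then for every a,b,c,d,R,S > 0, R·arcsin(√(ab/((R+a)(R+b)))) + S·arcsin(√(cd/((S+c)(S+d)))) ≤ (R+S)·arcsin(√((a+c)(b+d)/((R+S+a+c)(R+S+b+d)))). -/

import Mathlib

open Real Set

/-- The auxiliary function `η(y) = arcsin (1 - y⁻¹)`. -/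
noncomputable def etaFun : ℝ → ℝ := fun y => Real.arcsin (1 - y⁻¹)

lemma etaFun_hasDerivAt {y : ℝ} (hy : 1 < y) :
    HasDerivAt etaFun (1 / (y * Real.sqrt (2 * y - 1))) y := by
  have hy0 : (0:ℝ) < y := by linarith
  have h1 : (0:ℝ) < y⁻¹ := by positivity
  have h2 : y⁻¹ < 1 := by rw [inv_lt_one_iff₀]; right; exact hy
  have hg : HasDerivAt (fun y : ℝ => 1 - y⁻¹) ((y ^ 2)⁻¹) y := by
    simpa using (hasDerivAt_inv (ne_of_gt hy0)).const_sub 1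
  have hne1 : (1 - y⁻¹ : ℝ) ≠ -1 := by intro hcon; linarith
  have hne2 : (1 - y⁻¹ : ℝ) ≠ 1 := by intro hcon; linarith
  have hcomp := (Real.hasDerivAt_arcsin hne1 hne2).comp y hg
  have hsq : Real.sqrt (1 - (1 - y⁻¹) ^ 2) = Real.sqrt (2 * y - 1) / y := by
    have h3 : (1 : ℝ) - (1 - y⁻¹) ^ 2 = (Real.sqrt (2 * y - 1) / y) ^ 2 := by
      have h4 : Real.sqrt (2 * y - 1) ^ 2 = 2 * y - 1 :=
        Real.sq_sqrt (by linarith)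
      field_simp
      nlinarith [h4, Real.sq_sqrt (show (0:ℝ) ≤ y * 2 - 1 by linarith)]
    rw [h3, Real.sqrt_sq (by positivity)]
  have key : 1 / Real.sqrt (1 - (1 - y⁻¹) ^ 2) * (y ^ 2)⁻¹
      = 1 / (y * Real.sqrt (2 * y - 1)) := by
    rw [hsq]
    have hs : (0:ℝ) < Real.sqrt (2 * y - 1) := Real.sqrt_pos.mpr (by linarith)
    field_simp
  rw [← key]
  exact hcomp

lemma etaFun_concave : ConcaveOn ℝ (Set.Ici (1:ℝ)) etaFun := by
  have hint : interior (Set.Ici (1:ℝ)) = Set.Ioi 1 := interior_Ici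
  apply AntitoneOn.concaveOn_of_deriv (convex_Ici 1)
  · -- continuity
    apply Real.continuous_arcsin.comp_continuousOn
    apply ContinuousOn.sub continuousOn_const
    exact continuousOn_id.inv₀ fun x hx => by
      have : (1:ℝ) ≤ x := hx
      simp only [id]; intro h0; simp [h0] at this; linarith
  · rw [hint]
    intro x hx
    exact (etaFun_hasDerivAt hx).differentiableAt.differentiableWithinAt
  · rw [hint]
    intro x hx y hy hxy
    rw [(etaFun_hasDerivAt hx).deriv, (etaFun_hasDerivAt hy).deriv]
    have hx0 : (0:ℝ) < x := lt_trans one_pos hx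
    have hx1 : (0:ℝ) < 2 * x - 1 := by simp only [Set.mem_Ioi] at hx; linarith
    apply one_div_le_one_div_of_le (by positivity)
    have hs : Real.sqrt (2 * x - 1) ≤ Real.sqrt (2 * y - 1) :=
      Real.sqrt_le_sqrt (by linarith)
    have hs0 : (0:ℝ) ≤ Real.sqrt (2 * x - 1) := Real.sqrt_nonneg _
    nlinarith [Real.sqrt_nonneg (2 * y - 1)]

lemma etaFun_of_arcsin {s : ℝ} (h1 : s < 1) :
    Real.arcsin s = etaFun (1 / (1 - s)) := by
  unfold etaFun
  rw [one_div, inv_inv]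
  ring_nf

theorem arcsin_ineq_of_reciprocal_ineq
    (h : ∀ a b c d R S : ℝ, 0 < a → 0 < b → 0 < c → 0 < d → 0 < R → 0 < S →
      (R / (R + S)) * (1 / (1 - Real.sqrt (a * b / ((R + a) * (R + b))))) +
        (S / (R + S)) * (1 / (1 - Real.sqrt (c * d / ((S + c) * (S + d))))) ≤
      1 / (1 - Real.sqrt ((a + c) * (b + d) /
        ((R + S + a + c) * (R + S + b + d))))) :
    ∀ a b c d R S : ℝ, 0 < a → 0 < b → 0 < c → 0 < d → 0 < R → 0 < S →
      R * Real.arcsin (Real.sqrt (a * b / ((R + a) * (R + b)))) +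
        S * Real.arcsin (Real.sqrt (c * d / ((S + c) * (S + d)))) ≤
      (R + S) * Real.arcsin (Real.sqrt ((a + c) * (b + d) /
        ((R + S + a + c) * (R + S + b + d)))) := by
  intro a b c d R S ha hb hc hd hR hS
  have hRS : (0:ℝ) < R + S := by linarith
  set s1 := Real.sqrt (a * b / ((R + a) * (R + b))) with hs1def
  set s2 := Real.sqrt (c * d / ((S + c) * (S + d))) with hs2def
  set s3 := Real.sqrt ((a + c) * (b + d) / ((R + S + a + c) * (R + S + b + d)))
    with hs3def
  -- bounds on the square roots
  have hq1 : a * b / ((R + a) * (R + b)) < 1 := by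
    rw [div_lt_one (by positivity)]; nlinarith
  have hq2 : c * d / ((S + c) * (S + d)) < 1 := by
    rw [div_lt_one (by positivity)]; nlinarith
  have hq3 : (a + c) * (b + d) / ((R + S + a + c) * (R + S + b + d)) < 1 := by
    rw [div_lt_one (by positivity)]; nlinarith
  have hs1 : 0 ≤ s1 := Real.sqrt_nonneg _
  have hs2 : 0 ≤ s2 := Real.sqrt_nonneg _
  have hs3 : 0 ≤ s3 := Real.sqrt_nonneg _
  have hs1' : s1 < 1 := by
    rw [hs1def, show (1:ℝ) = Real.sqrt 1 by simp]
    exact Real.sqrt_lt_sqrt (by positivity) hq1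
  have hs2' : s2 < 1 := by
    rw [hs2def, show (1:ℝ) = Real.sqrt 1 by simp]
    exact Real.sqrt_lt_sqrt (by positivity) hq2
  have hs3' : s3 < 1 := by
    rw [hs3def, show (1:ℝ) = Real.sqrt 1 by simp]
    exact Real.sqrt_lt_sqrt (by positivity) hq3
  set k1 := 1 / (1 - s1) with hk1def
  set k2 := 1 / (1 - s2) with hk2def
  set k3 := 1 / (1 - s3) with hk3def
  have hk1 : 1 ≤ k1 := by
    rw [hk1def, le_div_iff₀ (by linarith)]; linarith
  have hk2 : 1 ≤ k2 := by
    rw [hk2def, le_div_iff₀ (by linarith)]; linarith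
  have hk3 : 1 ≤ k3 := by
    rw [hk3def, le_div_iff₀ (by linarith)]; linarith
  -- hypothesis gives the weighted average bound
  have hkey : R / (R + S) * k1 + S / (R + S) * k2 ≤ k3 :=
    h a b c d R S ha hb hc hd hR hS
  -- Jensen for the concave function etaFun
  have hw1 : (0:ℝ) ≤ R / (R + S) := by positivity
  have hw2 : (0:ℝ) ≤ S / (R + S) := by positivity
  have hwsum : R / (R + S) + S / (R + S) = 1 := by field_simp
  have hjensen := etaFun_concave.2 (Set.mem_Ici.mpr hk1) (Set.mem_Ici.mpr hk2)
    hw1 hw2 hwsum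
  simp only [smul_eq_mul] at hjensen
  -- the average point is at least 1
  have havg : 1 ≤ R / (R + S) * k1 + S / (R + S) * k2 := by nlinarith
  -- monotonicity of etaFun
  have hmono : etaFun (R / (R + S) * k1 + S / (R + S) * k2) ≤ etaFun k3 := by
    apply Real.monotone_arcsin
    have h1 : k3⁻¹ ≤ (R / (R + S) * k1 + S / (R + S) * k2)⁻¹ := by
      apply inv_anti₀ (by linarith) hkey
    linarith
  have hfinal : R / (R + S) * Real.arcsin s1 + S / (R + S) * Real.arcsin s2 ≤
      Real.arcsin s3 := by
    rw [etaFun_of_arcsin hs1', etaFun_of_arcsin hs2', etaFun_of_arcsin hs3']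
    exact le_trans hjensen hmono
  have := mul_le_mul_of_nonneg_left hfinal (le_of_lt hRS)
  have hexp : (R + S) * (R / (R + S) * Real.arcsin s1 +
      S / (R + S) * Real.arcsin s2) =
      R * Real.arcsin s1 + S * Real.arcsin s2 := by
    field_simp
  linarith [this, hexp.symm.le, hexp.le]
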